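/- Let (A,G,σ,δ) be a matched pair of groups and let S = A × G. Define s : S × S → S × S by s((a,x),(b,y)) = ((a, xy), (b(δ_x(a))⁻¹, σ_{δ_x(a)}(y))). Then (S,s) is a bijective set-theoretic solution to the Pentagon Equation. Moreover the induced operation is (a,x)(b,y) = (a,xy), its idempotents are exactly the pairs (a,1) with a ∈ A, and the solution is irretractable: if θ_{(a,1)} = θ_{(b,1)} (where s(u,v) = (uv, θ_u(v))) then a = b. -/

import Mathlib

namespace PE

/-- `s` applied to components 1,2 of a triple. -/
def s12 {S : Type*} (s : S × S → S × S) : S × S × S → S × S × S :=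
  fun p => ((s (p.1, p.2.1)).1, (s (p.1, p.2.1)).2, p.2.2)

/-- `s` applied to components 1,3 of a triple. -/
def s13 {S : Type*} (s : S × S → S × S) : S × S × S → S × S × S :=
  fun p => ((s (p.1, p.2.2)).1, p.2.1, (s (p.1, p.2.2)).2)

/-- `s` applied to components 2,3 of a triple. -/
def s23 {S : Type*} (s : S × S → S × S) : S × S × S → S × S × S :=
  fun p => (p.1, s (p.2.1, p.2.2))

/-- `(S, s)` is a set-theoretic solution to the Pentagon Equation:
`s₂₃ ∘ s₁₃ ∘ s₁₂ = s₁₂ ∘ s₂₃`. -/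
def IsPE {S : Type*} (s : S × S → S × S) : Prop :=
  s23 s ∘ s13 s ∘ s12 s = s12 s ∘ s23 s

/-- The induced binary operation `x · y`: the first component of `s (x, y)`. -/
def mul {S : Type*} (s : S × S → S × S) (x y : S) : S := (s (x, y)).1

/-- The map `θ_x`: `theta s x y = θ_x(y)` is the second component of `s (x, y)`. -/
def theta {S : Type*} (s : S × S → S × S) (x y : S) : S := (s (x, y)).2

/-- The solution associated to a matched pair of groups `(A, G, σ, δ)`:
`s((a,x),(b,y)) = ((a, xy), (b·(δ_x(a))⁻¹, σ_{δ_x(a)}(y)))`. -/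
def mpSol {A G : Type*} [Group A] [Group G] (σ : A → G ≃ G) (δ : G → A ≃ A) :
    (A × G) × (A × G) → (A × G) × (A × G) :=
  fun p =>
    ((p.1.1, p.1.2 * p.2.2),
     (p.2.1 * (δ p.1.2 p.1.1)⁻¹, σ (δ p.1.2 p.1.1) p.2.2))

/-- the map associated to a matched pair of groups is a bijective
set-theoretic solution to the Pentagon Equation; its induced operation is
`(a,x)(b,y) = (a,xy)`, its idempotents are the pairs `(a,1)`, and the solution is
irretractable: `θ_{(a,1)} = θ_{(b,1)}` implies `a = b`. -/
theorem statement12 {A G : Type*} [Group A] [Group G]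
    (σ : A → G ≃ G) (δ : G → A ≃ A)
    (hσ : ∀ (a b : A) (x : G), σ (a * b) x = σ a (σ b x))
    (hδ : ∀ (x y : G) (a : A), δ (x * y) a = δ y (δ x a))
    (hσδ : ∀ (a : A) (x y : G), σ a (x * y) = σ a x * σ (δ x a) y)
    (hδσ : ∀ (x : G) (a b : A), δ x (a * b) = δ (σ b x) a * δ x b) :
    IsPE (mpSol σ δ) ∧ Function.Bijective (mpSol σ δ) ∧
    (∀ p q : A × G, mul (mpSol σ δ) p q = (p.1, p.2 * q.2)) ∧
    (∀ p : A × G, mul (mpSol σ δ) p p = p ↔ p.2 = 1) ∧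
    (∀ a b : A, theta (mpSol σ δ) (a, 1) = theta (mpSol σ δ) (b, 1) → a = b) := by
  -- basic consequences
  have hσ1 : ∀ x : G, σ 1 x = x := by
    intro x
    have h := hσ 1 1 x
    simp only [one_mul] at h
    exact ((σ (1:A)).injective h.symm)
  have hδ1 : ∀ a : A, δ 1 a = a := by
    intro a
    have h := hδ 1 1 a
    simp only [one_mul] at h
    exact ((δ (1:G)).injective h.symm)
  have hσinv : ∀ (a : A) (x : G), σ a⁻¹ (σ a x) = x := by
    intro a x
    rw [← hσ, inv_mul_cancel, hσ1]
  have hδone : ∀ z : G, δ z (1 : A) = 1 := by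
    intro z
    have h := hδσ z 1 1
    simp only [one_mul, hσ1] at h
    exact right_eq_mul.mp h
  have hδinv : ∀ (z : G) (u : A), δ (σ u z) u⁻¹ = (δ z u)⁻¹ := by
    intro z u
    have h := hδσ z u⁻¹ u
    rw [inv_mul_cancel, hδone] at h
    exact (eq_inv_of_mul_eq_one_left h.symm)
  -- key identity for the third component of the PE computation
  have key : ∀ (a b : A) (x y : G),
      δ (σ (δ x a) y) (b * (δ x a)⁻¹) = δ y b * (δ (x * y) a)⁻¹ := by
    intro a b x y
    rw [hδσ, hσinv, hδinv, hδ]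
  refine ⟨?_, ?_, ?_, ?_, ?_⟩
  · -- Pentagon equation
    funext p
    obtain ⟨⟨a, x⟩, ⟨b, y⟩, ⟨c, z⟩⟩ := p
    simp only [Function.comp_apply, s12, s13, s23, mpSol, Prod.mk.injEq]
    refine ⟨⟨trivial, (mul_assoc x y z)⟩, ⟨trivial, ?_⟩, ?_, ?_⟩
    · rw [hσδ, hδ]
    · rw [key]
      group
    · rw [key, hσ, hσinv]
  · -- bijectivity
    set g : (A × G) × (A × G) → (A × G) × (A × G) := fun p =>
      ((p.1.1, (σ p.1.1).symm (σ p.1.1 p.1.2 * (p.2.2)⁻¹)),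
       (p.2.1 * δ ((σ p.1.1).symm (σ p.1.1 p.1.2 * (p.2.2)⁻¹)) p.1.1,
        ((σ p.1.1).symm (σ p.1.1 p.1.2 * (p.2.2)⁻¹))⁻¹ * p.1.2)) with hg
    have hleft : Function.LeftInverse g (mpSol σ δ) := by
      intro p
      obtain ⟨⟨a, x⟩, ⟨b, y⟩⟩ := p
      have hx : (σ a).symm (σ a (x * y) * (σ (δ x a) y)⁻¹) = x := by
        rw [hσδ, mul_inv_cancel_right, Equiv.symm_apply_apply]
      simp only [hg, mpSol, hx, inv_mul_cancel_right, inv_mul_cancel_left]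
    have hright : Function.RightInverse g (mpSol σ δ) := by
      intro p
      obtain ⟨⟨a, z⟩, ⟨c, w⟩⟩ := p
      set x : G := (σ a).symm (σ a z * w⁻¹) with hxdef
      have hax : σ a x = σ a z * w⁻¹ := (σ a).apply_symm_apply _
      have hw : σ (δ x a) (x⁻¹ * z) = w := by
        have h1 : σ a z = σ a x * σ (δ x a) (x⁻¹ * z) := by
          rw [← hσδ, mul_inv_cancel_left]
        rw [hax] at h1
        have h2 : σ a z * w⁻¹ * σ (δ x a) (x⁻¹ * z) = σ a z * w⁻¹ * w := by
          rw [← h1]; group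
        exact mul_left_cancel h2
      simp only [hg, mpSol, ← hxdef, hw, mul_inv_cancel_left, mul_inv_cancel_right]
    exact ⟨hleft.injective, hright.surjective⟩
  · intro p q; rfl
  · intro p
    obtain ⟨a, x⟩ := p
    simp only [mul, mpSol, Prod.mk.injEq, true_and]
    exact mul_eq_left
  · intro a b h
    have h1 := congrFun h ((1 : A), (1 : G))
    simp only [theta, mpSol, hδ1] at h1
    have h2 := congrArg Prod.fst h1
    simp only [one_mul] at h2
    exact inv_injective h2

end PE
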